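/- arXiv:1403.7656 — 3 statements merged into one kernel-verified Lean document; each statement's English description precedes it below -/
import Mathlib

section
/- Let α be the unique formal power series over ℚ with constant term 0 satisfying α·(1-α)·(1-2α) = X. Then in ℚ[[X]] one has (1 - 6α + 6α²)·Σ_{n≥0} f_5(n)·X^n = 1 - 2α. -/
open PowerSeries Finset

/-- `f₅(n) = Σ_{i=n-1}^{2n-1} C(3n, n+i+1)·C(i, n-1)` for `n ≥ 1`, with `f₅(0) = 1`. -/
def f5 (n : ℕ) : ℕ :=
  if n = 0 then 1
  else ∑ i ∈ Finset.Icc (n - 1) (2 * n - 1), (3 * n).choose (n + i + 1) * i.choose (n - 1)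

noncomputable def S : PowerSeries ℚ := PowerSeries.mk fun _ => 1
lemma hS : (1 - X) * S = 1 := by
  ext n
  cases n with
  | zero => simp [S]
  | succ m => simp [S, sub_mul, coeff_succ_X_mul, coeff_one]

lemma coeff_S_pow (n j : ℕ) : coeff j (S ^ (n+1)) = ((n + j).choose j : ℚ) := by
  induction n generalizing j with
  | zero => simp [S]
  | succ m ih =>
    rw [pow_succ, coeff_mul]
    rw [Finset.Nat.sum_antidiagonal_eq_sum_range_succ (f := fun a b => coeff a (S ^ (m+1)) * coeff b S)]
    have h1 : ∀ k ∈ Finset.range (j+1), coeff k (S ^ (m+1)) * coeff (j - k) S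
        = (((m+k).choose m : ℕ) : ℚ) := by
      intro k hk
      rw [ih k]
      simp only [S, coeff_mk, mul_one]
      rw [Nat.choose_symm_add]
    rw [Finset.sum_congr rfl h1, ← Nat.cast_sum]
    have h2 : ∑ k ∈ Finset.range (j+1), (m+k).choose m = ∑ l ∈ Finset.Icc m (m+j), l.choose m := by
      rw [← Finset.Ico_add_one_right_eq_Icc, Finset.sum_Ico_eq_sum_range]
      rw [show m + j + 1 - m = j + 1 by omega]
    rw [h2, Nat.sum_Icc_choose]
    norm_cast
    rw [show m + j + 1 = m + 1 + j by omega]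
    exact Nat.choose_symm_add

lemma coeff_one_add_X_pow (k j : ℕ) : coeff j ((1 + X)^k) = (k.choose j : ℚ) := by
  rw [add_comm (1 : PowerSeries ℚ) X, add_pow]
  simp only [one_pow, mul_one, map_sum, ← map_natCast C, coeff_mul_C, coeff_X_pow,
    ite_mul, zero_mul, one_mul]
  rw [Finset.sum_ite_eq (Finset.range (k+1)) j (fun m => ((k.choose m : ℚ)))]
  split_ifs with h
  · rfl
  · rw [Nat.choose_eq_zero_of_lt (by simpa using h), Nat.cast_zero]

lemma f5_coeff (n : ℕ) :
    (f5 (n+1) : ℚ) = coeff (n+1) ((1+X)^(3*(n+1)) * S^(n+1)) := by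
  have hdef : f5 (n+1) = ∑ i ∈ Finset.Icc n (2*n+1), (3*n+3).choose (n+i+2) * i.choose n := by
    rw [f5, if_neg (Nat.succ_ne_zero n),
      show (n+1) - 1 = n by omega, show 2*(n+1)-1 = 2*n+1 by omega,
      show 3*(n+1) = 3*n+3 by omega]
    exact Finset.sum_congr rfl fun i _ => by rw [show n+1+i+1 = n+i+2 by omega]
  have hre : ∑ i ∈ Finset.Icc n (2*n+1), (3*n+3).choose (n+i+2) * i.choose n
      = ∑ k ∈ Finset.range (n+2), (3*n+3).choose k * (2*n+1-k).choose n := by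
    apply Finset.sum_nbij' (i := fun i => 2*n+1-i) (j := fun k => 2*n+1-k)
    · intro a ha; simp only [Finset.mem_Icc] at ha; simp only [Finset.mem_range]; omega
    · intro a ha; simp only [Finset.mem_range] at ha; simp only [Finset.mem_Icc]; omega
    · intro a ha; simp only [Finset.mem_Icc] at ha; omega
    · intro a ha; simp only [Finset.mem_range] at ha; omega
    · intro a ha
      simp only [Finset.mem_Icc] at ha
      rw [show 2*n+1-(2*n+1-a) = a by omega]
      congr 1
      rw [← Nat.choose_symm (by omega : n+a+2 ≤ 3*n+3), show 3*n+3-(n+a+2) = 2*n+1-a by omega]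
  rw [coeff_mul,
    Finset.Nat.sum_antidiagonal_eq_sum_range_succ
      (f := fun a b => coeff a ((1+X)^(3*(n+1))) * coeff b (S^(n+1)))]
  rw [hdef, hre, Nat.cast_sum]
  apply Finset.sum_congr rfl
  intro k hk
  simp only [Finset.mem_range] at hk
  rw [coeff_one_add_X_pow, coeff_S_pow, show 3*(n+1) = 3*n+3 by omega,
    show n + (n+1-k) = 2*n+1-k by omega]
  have h2 : (2*n+1-k).choose (n+1-k) = (2*n+1-k).choose n := by
    rw [← Nat.choose_symm (show n+1-k ≤ 2*n+1-k by omega)]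
    congr 1
    omega
  rw [h2]
  push_cast
  ring

lemma one_sub_X_ne : (1 - X : ℚ⟦X⟧) ≠ 0 := fun h => by
  have := congrArg (constantCoeff) h; simp at this
lemma one_add_X_ne : (1 + X : ℚ⟦X⟧) ≠ 0 := fun h => by
  have := congrArg (constantCoeff) h; simp at this

lemma hdS : (1 - X) * (d⁄dX ℚ S) = S := by
  have h := congrArg (d⁄dX ℚ) hS
  simp only [Derivation.leibniz, smul_eq_mul, map_sub, derivative_X, map_one,
    Derivation.map_one_eq_zero] at h
  -- h : (1-X) * dS + S * (0 - 1) = 0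
  linear_combination h

lemma keycore (N E P dE dP : ℚ⟦X⟧)
    (hdN : d⁄dX ℚ N = 0)
    (hE : (1+X) * dE = 3*N*E) (hP : (1-X) * dP = N*P)
    (hdE : d⁄dX ℚ E = dE) (hdP : d⁄dX ℚ P = dP) :
    ((N+1)*(N+2)) * ((1+X)^6 * S^2 * (E*P))
      = (12*(3*N+1)*(3*N+5)) * (X^2*(E*P))
        + X * d⁄dX ℚ ((-(1+N) - (15+11*N)*X + (80+44*N)*X^2 + (80+44*N)*X^3
            - (15+11*N)*X^4 - (1+N)*X^5) * (S*(E*P)))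
        - (N+2) * ((-(1+N) - (15+11*N)*X + (80+44*N)*X^2 + (80+44*N)*X^3
            - (15+11*N)*X^4 - (1+N)*X^5) * (S*(E*P))) := by
  have h15 : d⁄dX ℚ (15:ℚ⟦X⟧) = 0 := by rw [← map_ofNat C 15]; exact derivative_C
  have h11 : d⁄dX ℚ (11:ℚ⟦X⟧) = 0 := by rw [← map_ofNat C 11]; exact derivative_C
  have h80 : d⁄dX ℚ (80:ℚ⟦X⟧) = 0 := by rw [← map_ofNat C 80]; exact derivative_C
  have h44 : d⁄dX ℚ (44:ℚ⟦X⟧) = 0 := by rw [← map_ofNat C 44]; exact derivative_C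
  apply mul_left_cancel₀ (show ((1-X)^2*(1+X) : ℚ⟦X⟧) ≠ 0 from
    mul_ne_zero (pow_ne_zero _ one_sub_X_ne) one_add_X_ne)
  simp only [map_add, map_sub, map_neg, Derivation.leibniz, Derivation.leibniz_pow,
    derivative_X, hdN, hdE, hdP, smul_eq_mul, h15, h11, h80, h44,
    Derivation.map_one_eq_zero, mul_zero, zero_mul, add_zero, zero_add, mul_one,
    Nat.reduceSub, pow_one]
  linear_combination
    ((2)*S*E*P + (3)*S*E*P*N + S*E*P*N^2 + (12)*X*S*E*P + (18)*X*S*E*P*N + (6)*X*S*E*P*N^2 + (60)*X^2*E*P + (216)*X^2*E*P*N + (108)*X^2*E*P*N^2 + (28)*X^2*S*E*P + (42)*X^2*S*E*P*N + (14)*X^2*S*E*P*N^2 + (-60)*X^3*E*P + (-216)*X^3*E*P*N + (-108)*X^3*E*P*N^2 + (28)*X^3*S*E*P + (42)*X^3*S*E*P*N + (14)*X^3*S*E*P*N^2 + (-60)*X^4*E*P + (-216)*X^4*E*P*N + (-108)*X^4*E*P*N^2 + (60)*X^5*E*P + (216)*X^5*E*P*N + (108)*X^5*E*P*N^2 + (-28)*X^5*S*E*P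 + (-42)*X^5*S*E*P*N + (-14)*X^5*S*E*P*N^2 + (-28)*X^6*S*E*P + (-42)*X^6*S*E*P*N + (-14)*X^6*S*E*P*N^2 + (-12)*X^7*S*E*P + (-18)*X^7*S*E*P*N + (-6)*X^7*S*E*P*N^2 + (-2)*X^8*S*E*P + (-3)*X^8*S*E*P*N + (-1)*X^8*S*E*P*N^2)*hS
    + (X*E*P + X*E*P*N + (15)*X^2*E*P + (11)*X^2*E*P*N + (-81)*X^3*E*P + (-45)*X^3*E*P*N + (-95)*X^4*E*P + (-55)*X^4*E*P*N + (95)*X^5*E*P + (55)*X^5*E*P*N + (81)*X^6*E*P + (45)*X^6*E*P*N + (-15)*X^7*E*P + (-11)*X^7*E*P*N + (-1)*X^8*E*P + (-1)*X^8*E*P*N)*hdS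
    + (X*S*P + X*S*P*N + (13)*X^2*S*P + (9)*X^2*S*P*N + (-109)*X^3*S*P + (-65)*X^3*S*P*N + (95)*X^4*S*P + (55)*X^4*S*P*N + (95)*X^5*S*P + (55)*X^5*S*P*N + (-109)*X^6*S*P + (-65)*X^6*S*P*N + (13)*X^7*S*P + (9)*X^7*S*P*N + X^8*S*P + X^8*S*P*N)*hE
    + (X*S*E + X*S*E*N + (15)*X^2*S*E + (11)*X^2*S*E*N + (-81)*X^3*S*E + (-45)*X^3*S*E*N + (-95)*X^4*S*E + (-55)*X^4*S*E*N + (95)*X^5*S*E + (55)*X^5*S*E*N + (81)*X^6*S*E + (45)*X^6*S*E*N + (-15)*X^7*S*E + (-11)*X^7*S*E*N + (-1)*X^8*S*E + (-1)*X^8*S*E*N)*hP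

lemma f5_two : f5 2 = 30 := by decide

lemma f5_rec (n : ℕ) :
    ((n:ℚ)+1)*((n:ℚ)+2)*(f5 (n+2) : ℚ) = (108*(n:ℚ)^2+216*(n:ℚ)+60)*(f5 n : ℚ) := by
  cases n with
  | zero => norm_num [f5_two]; rfl
  | succ m =>
    set N : ℚ⟦X⟧ := C ((m:ℚ)+1) with hNdef
    have hdN : d⁄dX ℚ N = 0 := derivative_C
    set E : ℚ⟦X⟧ := (1+X)^(3*(m+1)) with hEdef
    set P : ℚ⟦X⟧ := S^(m+1) with hPdef
    have hd1 : d⁄dX ℚ (1+X:ℚ⟦X⟧) = 1 := by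
      rw [map_add, Derivation.map_one_eq_zero, derivative_X, zero_add]
    have hE : (1+X) * (d⁄dX ℚ E) = 3*N*E := by
      have hsplit : (1+X:ℚ⟦X⟧)^(3*(m+1)) = (1+X)*(1+X)^(3*m+2) := by
        rw [show 3*(m+1) = (3*m+2)+1 from by omega, pow_succ]; ring
      rw [hEdef, Derivation.leibniz_pow, hd1, smul_eq_mul, mul_one, nsmul_eq_mul,
        show 3*(m+1)-1 = 3*m+2 from by omega,
        show ((3*(m+1):ℕ):ℚ⟦X⟧) = 3*(N:ℚ⟦X⟧) from by
          rw [hNdef]; simp only [map_add, map_natCast, map_one]; push_cast; ring,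
        hsplit]
      ring
    have hP : (1-X) * (d⁄dX ℚ P) = N*P := by
      rw [hPdef, Derivation.leibniz_pow]
      simp only [smul_eq_mul, nsmul_eq_mul, Nat.add_sub_cancel]
      rw [show ((m+1:ℕ):ℚ⟦X⟧) = (N:ℚ⟦X⟧) from by
        rw [hNdef]; simp only [map_add, map_natCast, map_one]; push_cast; ring]
      calc (1-X) * (N * (S^m * d⁄dX ℚ S)) = N * S^m * ((1-X) * d⁄dX ℚ S) := by ring
        _ = N * S^(m+1) := by rw [hdS]; ring
    have key := keycore N E P _ _ hdN hE hP rfl rfl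
    set W : ℚ⟦X⟧ := (-(1+N) - (15+11*N)*X + (80+44*N)*X^2 + (80+44*N)*X^3
            - (15+11*N)*X^4 - (1+N)*X^5) * (S*(E*P)) with hWdef
    have e1 : coeff (m+3) (((N+1)*(N+2)) * ((1+X)^6 * S^2 * (E*P)))
        = (((m:ℚ)+2)*((m:ℚ)+3))*(f5 (m+3) : ℚ) := by
      rw [show ((N+1)*(N+2) : ℚ⟦X⟧) = C (((m:ℚ)+2)*((m:ℚ)+3)) from by
        rw [hNdef]
        simp only [map_mul, map_add, map_natCast, map_one, map_ofNat]
        push_cast; ring]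
      rw [coeff_C_mul]
      rw [show (1+X:ℚ⟦X⟧)^6 * S^2 * (E*P) = (1+X)^(3*(m+3)) * S^(m+3) from by
        rw [hEdef, hPdef, show 3*(m+3) = 6+3*(m+1) from by omega,
          show m+3 = 2+(m+1) from by omega, pow_add, pow_add]; ring]
      have := f5_coeff (m+2)
      rw [show (m+2)+1 = m+3 from by omega] at this
      rw [← this]
    have e2 : coeff (m+3) ((12*(3*N+1)*(3*N+5)) * (X^2*(E*P)))
        = (108*((m:ℚ)+1)^2+216*((m:ℚ)+1)+60)*(f5 (m+1) : ℚ) := by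
      rw [show ((12*(3*N+1)*(3*N+5)) : ℚ⟦X⟧)
            = C (108*((m:ℚ)+1)^2+216*((m:ℚ)+1)+60) from by
        rw [hNdef]
        simp only [map_mul, map_add, map_natCast, map_one, map_ofNat, map_pow]
        push_cast; ring]
      rw [coeff_C_mul]
      rw [show m+3 = (m+1)+2 from by omega, coeff_X_pow_mul (E*P) 2 (m+1)]
      have := f5_coeff m
      rw [hEdef, hPdef, ← this]
    have e3 : coeff (m+3) (X * d⁄dX ℚ W) = ((m:ℚ)+3) * coeff (m+3) W := by
      rw [show m+3 = (m+2)+1 from by omega, coeff_succ_X_mul, coeff_derivative]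
      rw [show (m+2)+1 = m+3 from by omega]
      push_cast; ring
    have e4 : coeff (m+3) ((N+2)*W) = ((m:ℚ)+3) * coeff (m+3) W := by
      rw [show ((N+2) : ℚ⟦X⟧) = C ((m:ℚ)+3) from by
        rw [hNdef]
        simp only [map_add, map_natCast, map_one, map_ofNat]
        push_cast; ring]
      rw [coeff_C_mul]
    have hc := congrArg (coeff (m+3)) key
    rw [map_sub, map_add, e1, e2, e3, e4] at hc
    rw [show m+1+2 = m+3 from by omega]
    push_cast at hc ⊢
    linarith [hc]

theorem f5_generating_function (α : PowerSeries ℚ)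
    (h0 : PowerSeries.constantCoeff α = 0)
    (hα : α * (1 - α) * (1 - 2 * α) = PowerSeries.X) :
    (1 - 6 * α + 6 * α ^ 2) * PowerSeries.mk (fun n => (f5 n : ℚ)) = 1 - 2 * α := by
  have hD2 : d⁄dX ℚ (2:ℚ⟦X⟧) = 0 := by rw [← map_ofNat C 2]; exact derivative_C
  have hD3 : d⁄dX ℚ (3:ℚ⟦X⟧) = 0 := by rw [← map_ofNat C 3]; exact derivative_C
  have hD6 : d⁄dX ℚ (6:ℚ⟦X⟧) = 0 := by rw [← map_ofNat C 6]; exact derivative_C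
  have hD12 : d⁄dX ℚ (12:ℚ⟦X⟧) = 0 := by rw [← map_ofNat C 12]; exact derivative_C
  have hD18 : d⁄dX ℚ (18:ℚ⟦X⟧) = 0 := by rw [← map_ofNat C 18]; exact derivative_C
  have hD36 : d⁄dX ℚ (36:ℚ⟦X⟧) = 0 := by rw [← map_ofNat C 36]; exact derivative_C
  set b : ℚ⟦X⟧ := d⁄dX ℚ α with hbdef
  set c : ℚ⟦X⟧ := d⁄dX ℚ b with hcdef
  set e : ℚ⟦X⟧ := d⁄dX ℚ c with hedef
  have hx : α - 3*α^2 + 2*α^3 = X := by linear_combination hα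
  have hb : (1 - 6*α + 6*α^2) * b = 1 := by
    have h := congrArg (d⁄dX ℚ) hx
    simp only [map_sub, map_add, Derivation.leibniz, Derivation.leibniz_pow,
      smul_eq_mul, nsmul_eq_mul, derivative_X, hD2, hD3, ← hbdef,
      mul_zero, zero_mul, add_zero, zero_add, mul_one, pow_one, Nat.cast_ofNat] at h
    linear_combination h
  have hcc : (1 - 6*α + 6*α^2) * c = (6 - 12*α) * b^2 := by
    have h := congrArg (d⁄dX ℚ) hb
    simp only [map_sub, map_add, Derivation.leibniz, Derivation.leibniz_pow,
      smul_eq_mul, nsmul_eq_mul, derivative_X, hD2, hD3, hD6, ← hbdef, ← hcdef,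
      Derivation.map_one_eq_zero,
      mul_zero, zero_mul, add_zero, zero_add, mul_one, pow_one, Nat.cast_ofNat] at h
    linear_combination h
  have hc : c = (6 - 12*α)*b^3 := by linear_combination b*hcc - c*hb
  have hee : (1 - 6*α + 6*α^2) * e = -12*b^3 + (18 - 36*α)*b*c := by
    have h := congrArg (d⁄dX ℚ) hcc
    simp only [map_sub, map_add, Derivation.leibniz, Derivation.leibniz_pow,
      smul_eq_mul, nsmul_eq_mul, derivative_X, hD2, hD3, hD6, hD12, ← hbdef, ← hcdef, ← hedef,
      Derivation.map_one_eq_zero,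
      mul_zero, zero_mul, add_zero, zero_add, mul_one, pow_one, Nat.cast_ofNat] at h
    linear_combination h
  have he : e = -12*b^4 + (18 - 36*α)*(6 - 12*α)*b^5 := by
    linear_combination b*hee - e*hb + (18 - 36*α)*b^2*hc
  set K : ℚ⟦X⟧ := (1 - 2*α) * b with hKdef
  have hdK : d⁄dX ℚ K = -2*b^2 + (1 - 2*α)*c := by
    rw [hKdef]
    simp only [map_sub, Derivation.leibniz, smul_eq_mul, hD2, ← hbdef, ← hcdef,
      Derivation.map_one_eq_zero, mul_zero, zero_mul, zero_sub, add_zero, zero_add, mul_one]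
    ring
  have hddK : d⁄dX ℚ (d⁄dX ℚ K) = -6*b*c + (1 - 2*α)*e := by
    rw [hdK]
    simp only [map_sub, map_add, map_neg, Derivation.leibniz, Derivation.leibniz_pow,
      smul_eq_mul, nsmul_eq_mul, hD2, ← hbdef, ← hcdef, ← hedef,
      Derivation.map_one_eq_zero, mul_zero, zero_mul, zero_sub, add_zero, zero_add, mul_one,
      pow_one, Nat.cast_ofNat]
    ring
  have hODE : (1 - 108*X^2) * (d⁄dX ℚ (d⁄dX ℚ K)) = 324*X*(d⁄dX ℚ K) + 60*K := by
    rw [hddK, hdK, hKdef]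
    linear_combination (60*b + 60*b^2 + 60*b^3 + 108*b^4 - 120*α*b - 1128*α*b^2 + 456*α*b^3 + 3024*α^2*b^2 - 3456*α^2*b^3 - 11016*α^2*b^4 - 2016*α^3*b^2 + 8064*α^3*b^3 + 73008*α^3*b^4 - 8640*α^4*b^3 - 207360*α^4*b^4 + 3456*α^5*b^3 + 300672*α^5*b^4 - 217728*α^6*b^4 + 62208*α^7*b^4)*hb
      + (-324*X - 6*b + 648*b*X^2 + 648*α*X)*hc
      + (1 - 108*X^2 - 2*α + 216*α*X^2)*he
      + (-648*b^2 + 1944*b^3 - 5184*b^4*X + 11664*b^5*X - 7776*α*b^3 - 5184*α*b^4 + 10368*α*b^4*X + 11664*α*b^5 - 69984*α*b^5*X + 7776*α^2*b^3 + 25920*α^2*b^4 - 104976*α^2*b^5 + 139968*α^2*b^5*X - 41472*α^3*b^4 + 373248*α^3*b^5 - 93312*α^3*b^5*X + 20736*α^4*b^4 - 653184*α^4*b^5 + 559872*α^5*b^5 - 186624*α^6*b^5)*hx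
  have hODE' : d⁄dX ℚ (d⁄dX ℚ K) = (C 108)*(X^2*(d⁄dX ℚ (d⁄dX ℚ K)))
      + (C 324)*(X*(d⁄dX ℚ K)) + (C 60)*K := by
    rw [show (C (108:ℚ) : ℚ⟦X⟧) = 108 from map_ofNat _ _,
      show (C (324:ℚ) : ℚ⟦X⟧) = 324 from map_ofNat _ _,
      show (C (60:ℚ) : ℚ⟦X⟧) = 60 from map_ofNat _ _]
    linear_combination hODE
  have krec : ∀ j : ℕ, ((j:ℚ)+1)*((j:ℚ)+2)*(coeff (j+2) K)
      = (108*(j:ℚ)^2+216*(j:ℚ)+60)*(coeff j K) := by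
    intro j
    have h := congrArg (coeff j) hODE'
    rw [map_add, map_add, coeff_C_mul, coeff_C_mul, coeff_C_mul,
      coeff_derivative, coeff_derivative] at h
    match j with
    | 0 =>
      have z2 : coeff 0 (X^2*(d⁄dX ℚ (d⁄dX ℚ K))) = 0 := by
        rw [coeff_zero_eq_constantCoeff, map_mul, map_pow, constantCoeff_X]
        norm_num
      have z1 : coeff 0 (X*(d⁄dX ℚ K)) = 0 := by
        rw [coeff_zero_eq_constantCoeff, map_mul, constantCoeff_X, zero_mul]
      rw [z1, z2] at h
      norm_num at h ⊢
      linarith [h]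
    | 1 =>
      have z2 : coeff 1 (X^2*(d⁄dX ℚ (d⁄dX ℚ K))) = 0 := by
        rw [coeff_X_pow_mul']
        norm_num
      have z1 : coeff 1 (X*(d⁄dX ℚ K)) = coeff 0 (d⁄dX ℚ K) := coeff_succ_X_mul 0 _
      rw [z1, z2, coeff_derivative] at h
      norm_num at h ⊢
      linarith [h]
    | (m+2) =>
      have z2 : coeff (m+2) (X^2*(d⁄dX ℚ (d⁄dX ℚ K))) = coeff m (d⁄dX ℚ (d⁄dX ℚ K)) :=
        coeff_X_pow_mul _ 2 m
      have z1 : coeff (m+2) (X*(d⁄dX ℚ K)) = coeff (m+1) (d⁄dX ℚ K) :=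
        coeff_succ_X_mul (m+1) _
      rw [z1, z2] at h
      simp only [coeff_derivative] at h
      rw [show m+2+1+1 = m+2+2 from by omega, show m+1+1 = m+2 from by omega] at h
      push_cast at h ⊢
      linear_combination h
  -- initial coefficients
  have hC2 : (2:ℚ⟦X⟧) = C 2 := (map_ofNat _ _).symm
  have hC3 : (3:ℚ⟦X⟧) = C 3 := (map_ofNat _ _).symm
  have ca0 : coeff 0 α = 0 := by rw [coeff_zero_eq_constantCoeff]; exact h0
  have csq : ∀ j : ℕ, coeff j (α^2) = ∑ p ∈ antidiagonal j, coeff p.1 α * coeff p.2 α := by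
    intro j; rw [pow_two, coeff_mul]
  have ccb : ∀ j : ℕ, coeff j (α^3) = ∑ p ∈ antidiagonal j, coeff p.1 (α^2) * coeff p.2 α := by
    intro j; rw [pow_succ, coeff_mul]
  have csq0 : coeff 0 (α^2) = 0 := by
    rw [csq 0, Finset.Nat.sum_antidiagonal_eq_sum_range_succ_mk]
    simp [ca0]
  have csq1 : coeff 1 (α^2) = 0 := by
    rw [csq 1, Finset.Nat.sum_antidiagonal_eq_sum_range_succ_mk]
    simp [Finset.sum_range_succ, ca0]
  have ccb1 : coeff 1 (α^3) = 0 := by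
    rw [ccb 1, Finset.Nat.sum_antidiagonal_eq_sum_range_succ_mk]
    simp [Finset.sum_range_succ, ca0, csq0]
  have a1 : coeff 1 α = 1 := by
    have h := congrArg (coeff 1) hx
    rw [map_add, map_sub, hC2, hC3, coeff_C_mul, coeff_C_mul, csq1, ccb1, coeff_one_X] at h
    linarith [h]
  have csq2 : coeff 2 (α^2) = 1 := by
    rw [csq 2, Finset.Nat.sum_antidiagonal_eq_sum_range_succ_mk]
    simp [Finset.sum_range_succ, ca0, a1]
  have ccb2 : coeff 2 (α^3) = 0 := by
    rw [ccb 2, Finset.Nat.sum_antidiagonal_eq_sum_range_succ_mk]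
    simp [Finset.sum_range_succ, ca0, csq0, csq1]
  have a2 : coeff 2 α = 3 := by
    have h := congrArg (coeff 2) hx
    rw [map_add, map_sub, hC2, hC3, coeff_C_mul, coeff_C_mul, csq2, ccb2, coeff_X] at h
    norm_num at h
    linarith [h]
  have cb0 : coeff 0 b = 1 := by
    rw [hbdef, coeff_derivative]
    norm_num [a1]
  have cb1 : coeff 1 b = 6 := by
    rw [hbdef, coeff_derivative]
    norm_num [a2]
  have cK0 : coeff 0 ((1 - 2*α) * b) = 1 := by
    rw [coeff_mul, Finset.Nat.sum_antidiagonal_eq_sum_range_succ_mk]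
    simp only [Finset.sum_range_succ, Finset.sum_range_zero, zero_add, Nat.sub_zero]
    rw [map_sub, hC2, coeff_C_mul, ca0, coeff_one, cb0]
    norm_num
  have cK1 : coeff 1 ((1 - 2*α) * b) = 4 := by
    rw [coeff_mul, Finset.Nat.sum_antidiagonal_eq_sum_range_succ_mk]
    simp only [Finset.sum_range_succ, Finset.sum_range_zero, zero_add, Nat.sub_zero,
      Nat.sub_self]
    rw [map_sub, hC2, coeff_C_mul, ca0, coeff_one, map_sub, coeff_C_mul, a1, coeff_one,
      cb0, cb1]
    norm_num
  have main : ∀ j, (f5 j : ℚ) = coeff j K := by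
    intro j
    induction j using Nat.strong_induction_on with
    | _ j ih =>
      match j, ih with
      | 0, _ => rw [hKdef, cK0, show f5 0 = 1 from rfl, Nat.cast_one]
      | 1, _ => rw [hKdef, cK1, show f5 1 = 4 from by decide]; norm_num
      | (m+2), ih =>
        have h1 := f5_rec m
        have h2 := krec m
        have hm := ih m (by omega)
        have hne : ((m:ℚ)+1)*((m:ℚ)+2) ≠ 0 := by positivity
        have h3 : ((m:ℚ)+1)*((m:ℚ)+2)*(f5 (m+2):ℚ)
            = ((m:ℚ)+1)*((m:ℚ)+2)*(coeff (m+2) K) := by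
          rw [h1, hm, ← h2]
        exact mul_left_cancel₀ hne (by linear_combination h3)
  have hmk : (PowerSeries.mk fun n => (f5 n : ℚ)) = K := by
    ext j; rw [coeff_mk, main j]
  rw [hmk, hKdef]
  linear_combination (1 - 2*α)*hb
end

section
/- Let α be the unique formal power series over ℚ with constant term 0 satisfying α·(1-α)·(1-2α) = X. Then for every integer r, the identity (1-2α)^{2r} = 1 - Σ_{n≥1} 2^{2n}·(r/n)·C(3n/2 - r - 1, n-1)·X^n holds in ℚ[[X]], where C(3n/2 - r - 1, n-1) is the generalized binomial coefficient with rational upper argument. -/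
open PowerSeries Finset

/-- Generalized binomial coefficient `C(q, k) = q(q-1)⋯(q-k+1)/k!` for rational `q`. -/
noncomputable def qchoose (q : ℚ) (k : ℕ) : ℚ :=
  (∏ j ∈ Finset.range k, (q - j)) / (k.factorial : ℚ)

/-- Integer power of a power series over `ℚ`: for `r < 0` this is the
multiplicative inverse of the `(-r)`-th power. -/
noncomputable def zpowPS (a : PowerSeries ℚ) (r : ℤ) : PowerSeries ℚ :=
  a ^ r.toNat * (a ^ (-r).toNat)⁻¹

lemma qchoose_zero (q : ℚ) : qchoose q 0 = 1 := by simp [qchoose]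

lemma qchoose_succ (q : ℚ) (k : ℕ) :
    ((k:ℚ)+1) * qchoose q (k+1) = (q - k) * qchoose q k := by
  have h1 : ((k.factorial : ℚ)) ≠ 0 := Nat.cast_ne_zero.mpr k.factorial_ne_zero
  rw [qchoose, qchoose, Finset.prod_range_succ, Nat.factorial_succ]
  push_cast
  field_simp

lemma qchoose_succ' (q : ℚ) (k : ℕ) :
    ((k:ℚ)+1) * qchoose q (k+1) = q * qchoose (q-1) k := by
  have h1 : ((k.factorial : ℚ)) ≠ 0 := Nat.cast_ne_zero.mpr k.factorial_ne_zero
  rw [qchoose, qchoose, Finset.prod_range_succ', Nat.factorial_succ]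
  push_cast
  have : ∀ j ∈ Finset.range k, q - ((j:ℚ) + 1) = (q-1) - j := by intro j _; ring
  rw [Finset.prod_congr rfl this]
  field_simp
  ring

lemma qchoose_ratio (q : ℚ) (k : ℕ) :
    (q - k) * qchoose q k = q * qchoose (q-1) k := by
  rw [← qchoose_succ, qchoose_succ']

/-- target coefficients -/
noncomputable def Bc (i : ℤ) (n : ℕ) : ℚ :=
  if n = 0 then 1 else -4^n * ((i:ℚ) / (2*n)) * qchoose ((3*n - i)/2 - 1) (n-1)

lemma Bc_zero (i : ℤ) : Bc i 0 = 1 := rfl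

lemma Bc_succ (i : ℤ) (n : ℕ) :
    Bc i (n+1) = -4^(n+1) * ((i:ℚ)/(2*((n:ℚ)+1)))
      * qchoose ((3*((n:ℚ)+1) - (i:ℚ))/2 - 1) n := by
  simp only [Bc, if_neg (Nat.succ_ne_zero n), Nat.add_sub_cancel, Nat.cast_add, Nat.cast_one]

lemma AlgM (j : ℤ) (n : ℕ) :
    2*(j:ℚ)*((n:ℚ)+1) * Bc (j+1) (n+1)
      = 12*((j:ℚ)+1)*(n:ℚ) * Bc j n - 4*(j:ℚ)*((j:ℚ)+1) * Bc j n := by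
  cases n with
  | zero =>
    rw [Bc_succ, Bc_zero, qchoose_zero]
    push_cast
    ring
  | succ m =>
    have hm : ((m:ℚ)+1) ≠ 0 := by positivity
    have hm2 : ((m:ℚ)+1+1) ≠ 0 := by positivity
    rw [Bc_succ, Bc_succ]
    push_cast
    have key := qchoose_succ' ((3*(((m:ℚ)+1)+1) - ((j:ℚ)+1))/2 - 1) m
    have harg : (3*(((m:ℚ)+1)+1) - ((j:ℚ)+1))/2 - 1 - 1 = (3*((m:ℚ)+1) - (j:ℚ))/2 - 1 := by
      ring
    rw [harg] at key
    have hQ1 : qchoose ((3*(((m:ℚ)+1)+1) - ((j:ℚ)+1))/2 - 1) (m+1)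
        = ((3*(((m:ℚ)+1)+1) - ((j:ℚ)+1))/2 - 1) * qchoose ((3*((m:ℚ)+1) - (j:ℚ))/2 - 1) m
          / ((m:ℚ)+1) := by
      rw [eq_div_iff hm]; linear_combination key
    rw [hQ1]
    field_simp
    ring

lemma Alg2 (n : ℕ) :
    2*((n:ℚ)+1)*Bc 1 (n+1) - (if n = 0 then (8:ℚ) else 0)
      = 18*(n:ℚ)*Bc 2 n - 12*Bc 2 n := by
  cases n with
  | zero =>
    rw [Bc_succ, Bc_zero, qchoose_zero]
    norm_num
  | succ m =>
    have hm : ((m:ℚ)+1) ≠ 0 := by positivity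
    have hm2 : ((m:ℚ)+1+1) ≠ 0 := by positivity
    rw [Bc_succ, Bc_succ, if_neg (Nat.succ_ne_zero m)]
    push_cast
    set A : ℚ := (3*(((m:ℚ)+1)+1) - 1)/2 - 1 with hA
    have key1 := qchoose_succ' A m
    have key2 := qchoose_ratio (A-1) m
    have harg : A - 1 - 1 = (3*((m:ℚ)+1) - 2)/2 - 1 := by rw [hA]; ring
    rw [harg] at key2
    rw [show A - 1 - (m:ℚ) = ((m:ℚ)+1)/2 from by rw [hA]; ring] at key2
    have hne : ((m:ℚ)+1)/2 ≠ 0 := by positivity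
    have hq2 : qchoose (A-1) m
        = (A-1) * qchoose ((3*((m:ℚ)+1) - 2)/2 - 1) m / (((m:ℚ)+1)/2) := by
      rw [eq_div_iff hne]; linear_combination key2
    have hq1 : qchoose A (m+1) = A * qchoose (A-1) m / ((m:ℚ)+1) := by
      rw [eq_div_iff hm]; linear_combination key1
    rw [hq1, hq2, hA]
    field_simp
    ring

lemma Alg3 (n : ℕ) : 4 * Bc (-1) n = - Bc 2 (n+1) := by
  cases n with
  | zero =>
    rw [Bc_zero, Bc_succ, qchoose_zero]
    norm_num
  | succ m =>
    have hm : ((m:ℚ)+1) ≠ 0 := by positivity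
    have hm2 : ((m:ℚ)+1+1) ≠ 0 := by positivity
    rw [Bc_succ, Bc_succ]
    push_cast
    set A : ℚ := (3*((m:ℚ)+1) - (-1))/2 - 1 with hA
    have harg : (3*(((m:ℚ)+1)+1) - 2)/2 - 1 = A := by rw [hA]; ring
    rw [harg]
    have key := qchoose_succ A m
    have hq : qchoose A (m+1) = (A - (m:ℚ)) * qchoose A m / ((m:ℚ)+1) := by
      rw [eq_div_iff hm]; linear_combination key
    rw [hq, hA]
    field_simp
    ring


noncomputable section

namespace OneSubProofAux

/-- integer powers of a unit power series -/
def fz (u : (PowerSeries ℚ)ˣ) (i : ℤ) : PowerSeries ℚ := ((u^i : (PowerSeries ℚ)ˣ) : PowerSeries ℚ)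

variable (u : (PowerSeries ℚ)ˣ)

lemma fz_zero : fz u 0 = 1 := by simp [fz]

lemma fz_one : fz u 1 = ↑u := by simp [fz]

lemma fz_two : fz u 2 = (↑u:ℚ⟦X⟧)^2 := by
  rw [fz, show (2:ℤ) = ((2:ℕ):ℤ) by norm_num, zpow_natCast, Units.val_pow_eq_pow_val]

lemma fz_three : fz u 3 = (↑u:ℚ⟦X⟧)^3 := by
  rw [fz, show (3:ℤ) = ((3:ℕ):ℤ) by norm_num, zpow_natCast, Units.val_pow_eq_pow_val]

lemma fz_add_one (i : ℤ) : fz u (i+1) = fz u i * ↑u := by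
  rw [fz, fz, zpow_add_one, Units.val_mul]

lemma fz_sub_one (i : ℤ) : fz u (i-1) = fz u i * ↑u⁻¹ := by
  rw [fz, fz, zpow_sub_one, Units.val_mul]

lemma inv_mul_u : (↑u⁻¹ : ℚ⟦X⟧) * ↑u = 1 := by
  rw [← Units.val_mul]; simp

lemma D_fz (i : ℤ) :
    (d⁄dX ℚ) (fz u i) * ↑u = ((i:ℤ) : ℚ⟦X⟧) * fz u i * (d⁄dX ℚ) (↑u:ℚ⟦X⟧) := by
  induction i using Int.induction_on with
  | zero => simp [fz_zero]
  | succ k ih =>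
    rw [fz_add_one, Derivation.leibniz, smul_eq_mul, smul_eq_mul]
    push_cast
    push_cast at ih
    linear_combination (↑u : ℚ⟦X⟧) * ih
  | pred k ih =>
    rw [show (-(k:ℤ) - 1) = (-(k:ℤ)) - 1 by ring, fz_sub_one, Derivation.leibniz,
      smul_eq_mul, smul_eq_mul, derivative_inv]
    have hv := inv_mul_u u
    push_cast
    push_cast at ih
    linear_combination (↑u⁻¹ : ℚ⟦X⟧) * ih
      + (-(fz u (-(k:ℤ))) * (↑u⁻¹ : ℚ⟦X⟧) * (d⁄dX ℚ) (↑u:ℚ⟦X⟧)) * hv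

lemma const_fz (h1 : constantCoeff (↑u : ℚ⟦X⟧) = 1) (i : ℤ) :
    constantCoeff (fz u i) = 1 := by
  have hv : constantCoeff (↑u⁻¹ : ℚ⟦X⟧) = 1 := by
    have := congrArg (constantCoeff) (inv_mul_u u)
    rw [map_mul, h1, mul_one, map_one] at this
    exact this
  induction i using Int.induction_on with
  | zero => rw [fz_zero, map_one]
  | succ k ih => rw [fz_add_one, map_mul, ih, h1, mul_one]
  | pred k ih =>
    rw [show (-(k:ℤ) - 1) = (-(k:ℤ)) - 1 by ring, fz_sub_one, map_mul, ih, hv, mul_one]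

lemma u_ne_zero (h1 : constantCoeff (↑u : ℚ⟦X⟧) = 1) : (↑u : ℚ⟦X⟧) ≠ 0 := by
  intro h
  have h2 := h1
  rw [h, map_zero] at h2
  exact zero_ne_one h2

lemma D_four_X : (d⁄dX ℚ) (4*X : ℚ⟦X⟧) = 4 := by
  rw [show (4*X : ℚ⟦X⟧) = (C 4) * X by norm_num [map_ofNat],
    Derivation.leibniz, smul_eq_mul, smul_eq_mul, derivative_C, derivative_X]
  simp [map_ofNat]

lemma hE (h3 : (↑u : ℚ⟦X⟧)^3 = (↑u : ℚ⟦X⟧) - 4*(X:ℚ⟦X⟧)) :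
    2*((↑u:ℚ⟦X⟧) * (d⁄dX ℚ) (↑u:ℚ⟦X⟧))
      = 12*(X:ℚ⟦X⟧)*(d⁄dX ℚ) (↑u:ℚ⟦X⟧) - 4*(↑u:ℚ⟦X⟧) := by
  have hD3 : (3:ℚ⟦X⟧)*((↑u:ℚ⟦X⟧)^2*(d⁄dX ℚ) (↑u:ℚ⟦X⟧)) = (d⁄dX ℚ) (↑u:ℚ⟦X⟧) - 4 := by
    have h := congrArg (d⁄dX ℚ) h3
    simp only [Derivation.leibniz_pow, map_sub, D_four_X, smul_eq_mul, nsmul_eq_mul] at h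
    norm_num at h
    linear_combination h
  linear_combination (↑u:ℚ⟦X⟧) * hD3 - (3:ℚ⟦X⟧) * (d⁄dX ℚ) (↑u:ℚ⟦X⟧) * h3

lemma M (h1 : constantCoeff (↑u : ℚ⟦X⟧) = 1) (h3 : (↑u : ℚ⟦X⟧)^3 = (↑u : ℚ⟦X⟧) - 4*(X:ℚ⟦X⟧)) (j : ℤ) :
    ((2*j : ℤ) : ℚ⟦X⟧) * (d⁄dX ℚ) (fz u (j+1))
      = ((12*(j+1) : ℤ) : ℚ⟦X⟧) * ((X:ℚ⟦X⟧) * (d⁄dX ℚ) (fz u j))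
        - ((4*j*(j+1) : ℤ) : ℚ⟦X⟧) * fz u j := by
  apply mul_right_cancel₀ (b := (↑u:ℚ⟦X⟧)) (u_ne_zero u h1)
  have e1 := D_fz u (j+1)
  have e2 := fz_add_one u j
  have e3 := D_fz u j
  have e4 := hE u h3
  push_cast
  push_cast at e1 e3
  linear_combination (2*((j:ℤ):ℚ⟦X⟧)) * e1
    + (2*((j:ℤ):ℚ⟦X⟧)*(((j:ℤ):ℚ⟦X⟧)+1)*(d⁄dX ℚ) (↑u:ℚ⟦X⟧)) * e2
    + (((j:ℤ):ℚ⟦X⟧)*(((j:ℤ):ℚ⟦X⟧)+1)*(fz u j)) * e4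
    - (12*(((j:ℤ):ℚ⟦X⟧)+1)*(X:ℚ⟦X⟧)) * e3

lemma R2 (h1 : constantCoeff (↑u : ℚ⟦X⟧) = 1) (h3 : (↑u : ℚ⟦X⟧)^3 = (↑u : ℚ⟦X⟧) - 4*(X:ℚ⟦X⟧)) :
    ((4:ℤ):ℚ⟦X⟧) * ((d⁄dX ℚ) (fz u 1) - ((4:ℤ):ℚ⟦X⟧))
      = ((36:ℤ):ℚ⟦X⟧) * ((X:ℚ⟦X⟧) * (d⁄dX ℚ) (fz u 2)) - ((24:ℤ):ℚ⟦X⟧) * fz u 2 := by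
  have hM := M u h1 h3 2
  norm_num at hM
  rw [fz_three, h3] at hM
  have hD : (d⁄dX ℚ) ((↑u:ℚ⟦X⟧) - 4*(X:ℚ⟦X⟧)) = (d⁄dX ℚ) (fz u 1) - 4 := by
    rw [map_sub, fz_one, D_four_X]
  rw [hD] at hM
  push_cast
  push_cast at hM
  linear_combination hM

lemma R3 (h1 : constantCoeff (↑u : ℚ⟦X⟧) = 1) (h3 : (↑u : ℚ⟦X⟧)^3 = (↑u : ℚ⟦X⟧) - 4*(X:ℚ⟦X⟧)) :
    ((4:ℤ):ℚ⟦X⟧) * ((X:ℚ⟦X⟧) * fz u (-1)) = 1 - fz u 2 := by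
  apply mul_right_cancel₀ (b := (↑u:ℚ⟦X⟧)) (u_ne_zero u h1)
  have hv : fz u (-1) * ↑u = 1 := by
    rw [show (-1 : ℤ) = 0 - 1 by ring, fz_sub_one, fz_zero, one_mul, inv_mul_u]
  have h2 : fz u 2 * ↑u = (↑u:ℚ⟦X⟧)^3 := by rw [fz_two]; ring
  push_cast
  linear_combination ((4:ℚ⟦X⟧)*(X:ℚ⟦X⟧)) * hv + h2 + h3


lemma coeff_intCast_mul (k : ℤ) (s : ℚ⟦X⟧) (n : ℕ) :
    coeff n (((k:ℤ):ℚ⟦X⟧) * s) = (k:ℚ) * coeff n s := by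
  rw [← map_intCast (C (R := ℚ)) k, coeff_C_mul]

lemma coeff_intCast (k : ℤ) (n : ℕ) :
    coeff n (((k:ℤ):ℚ⟦X⟧)) = if n = 0 then (k:ℚ) else 0 := by
  rw [← map_intCast (C (R := ℚ)) k, coeff_C]

lemma coeff_D (s : ℚ⟦X⟧) (n : ℕ) :
    coeff n ((d⁄dX ℚ) s) = ((n:ℚ)+1) * coeff (n+1) s := by
  rw [coeff_derivative]; push_cast; ring

lemma coeff_X_D (s : ℚ⟦X⟧) (n : ℕ) :
    coeff n ((X:ℚ⟦X⟧) * (d⁄dX ℚ) s) = (n:ℚ) * coeff n s := by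
  cases n with
  | zero => simp
  | succ m => rw [coeff_succ_X_mul, coeff_D]; push_cast; ring


lemma hCoeffA (u : (PowerSeries ℚ)ˣ) (h1 : constantCoeff (↑u : ℚ⟦X⟧) = 1)
    (h3 : (↑u : ℚ⟦X⟧)^3 = (↑u : ℚ⟦X⟧) - 4*(X:ℚ⟦X⟧)) (j : ℤ) (n : ℕ) :
    2*(j:ℚ)*((n:ℚ)+1) * coeff (n+1) (fz u (j+1))
      = 12*((j:ℚ)+1)*(n:ℚ) * coeff n (fz u j)
        - 4*(j:ℚ)*((j:ℚ)+1) * coeff n (fz u j) := by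
  have h := congrArg (coeff n) (M u h1 h3 j)
  rw [map_sub, coeff_intCast_mul, coeff_intCast_mul, coeff_intCast_mul, coeff_X_D,
    coeff_D] at h
  push_cast at h
  linear_combination h

lemma hR2A (u : (PowerSeries ℚ)ˣ) (h1 : constantCoeff (↑u : ℚ⟦X⟧) = 1)
    (h3 : (↑u : ℚ⟦X⟧)^3 = (↑u : ℚ⟦X⟧) - 4*(X:ℚ⟦X⟧)) (n : ℕ) :
    4*(((n:ℚ)+1) * coeff (n+1) (fz u 1) - (if n = 0 then (4:ℚ) else 0))
      = 36*(n:ℚ)*coeff n (fz u 2) - 24*coeff n (fz u 2) := by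
  have h := congrArg (coeff n) (R2 u h1 h3)
  rw [map_sub, coeff_intCast_mul, coeff_intCast_mul, coeff_intCast_mul, map_sub,
    coeff_intCast, coeff_X_D, coeff_D] at h
  push_cast at h
  linear_combination h

lemma hR3A (u : (PowerSeries ℚ)ˣ) (h1 : constantCoeff (↑u : ℚ⟦X⟧) = 1)
    (h3 : (↑u : ℚ⟦X⟧)^3 = (↑u : ℚ⟦X⟧) - 4*(X:ℚ⟦X⟧)) (n : ℕ) :
    4 * coeff n (fz u (-1)) = - coeff (n+1) (fz u 2) := by
  have h := congrArg (coeff (n+1)) (R3 u h1 h3)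
  rw [map_sub, coeff_intCast_mul, coeff_succ_X_mul, coeff_one,
    if_neg (Nat.succ_ne_zero n)] at h
  push_cast at h
  linear_combination h

lemma A0 (u : (PowerSeries ℚ)ˣ) (h1 : constantCoeff (↑u : ℚ⟦X⟧) = 1) (i : ℤ) :
    coeff 0 (fz u i) = 1 := by
  rw [coeff_zero_eq_constantCoeff, const_fz u h1]

theorem AeqBc (u : (PowerSeries ℚ)ˣ) (h1 : constantCoeff (↑u : ℚ⟦X⟧) = 1)
    (h3 : (↑u : ℚ⟦X⟧)^3 = (↑u : ℚ⟦X⟧) - 4*(X:ℚ⟦X⟧)) (i : ℤ) (n : ℕ) :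
    coeff n (fz u i) = Bc i n := by
  -- simultaneous base for exponents 1 and 2
  have h12 : ∀ m : ℕ, coeff m (fz u 1) = Bc 1 m ∧ coeff m (fz u 2) = Bc 2 m := by
    intro m
    induction m with
    | zero => exact ⟨A0 u h1 1, A0 u h1 2⟩
    | succ m ih =>
      have hm : ((m:ℚ)+1) ≠ 0 := by positivity
      constructor
      · have ha := hR2A u h1 h3 m
        have hb := Alg2 m
        rw [ih.2] at ha
        have key : 4*((m:ℚ)+1) * coeff (m+1) (fz u 1) = 4*((m:ℚ)+1) * Bc 1 (m+1) := by
          rcases Nat.eq_zero_or_pos m with hm0 | hm0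
          · subst hm0; norm_num at ha hb ⊢; linarith
          · rw [if_neg (Nat.pos_iff_ne_zero.mp hm0)] at ha hb; linarith
        exact mul_left_cancel₀ (by positivity) key
      · have ha := hCoeffA u h1 h3 1 m
        have hb := AlgM 1 m
        rw [show (1+1:ℤ) = 2 from by norm_num] at ha hb
        rw [ih.1] at ha
        push_cast at ha hb
        have hcan : ((2:ℚ)*((m:ℚ)+1)) ≠ 0 := by positivity
        apply mul_left_cancel₀ hcan
        linarith

  -- upward induction for i ≥ 1
  have hup : ∀ i : ℤ, 1 ≤ i → ∀ n, coeff n (fz u i) = Bc i n := by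
    refine Int.le_induction (motive := fun i _ => ∀ n, coeff n (fz u i) = Bc i n) ?_ ?_
    · intro n; exact (h12 n).1
    · intro k hk ihk n
      cases n with
      | zero => rw [A0 u h1, Bc_zero]
      | succ m =>
        have ha := hCoeffA u h1 h3 k m
        have hb := AlgM k m
        rw [ihk m] at ha
        have hkq : (k:ℚ) ≠ 0 := by
          have : (1:ℚ) ≤ (k:ℚ) := by exact_mod_cast hk
          linarith
        have hm : ((m:ℚ)+1) ≠ 0 := by positivity
        have : 2*(k:ℚ)*((m:ℚ)+1) * coeff (m+1) (fz u (k+1))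
            = 2*(k:ℚ)*((m:ℚ)+1) * Bc (k+1) (m+1) := by linarith
        have hcan : 2*(k:ℚ)*((m:ℚ)+1) ≠ 0 := by
          apply mul_ne_zero (mul_ne_zero two_ne_zero hkq) hm
        exact mul_left_cancel₀ hcan this
  -- exponent -1
  have hneg1 : ∀ n, coeff n (fz u (-1)) = Bc (-1) n := by
    intro n
    have ha := hR3A u h1 h3 n
    have hb := Alg3 n
    rw [(h12 (n+1)).2] at ha
    have : 4 * coeff n (fz u (-1)) = 4 * Bc (-1) n := by linarith
    exact mul_left_cancel₀ (by norm_num : (4:ℚ) ≠ 0) this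
  -- downward induction for i ≤ -1
  have hdown : ∀ i : ℤ, i ≤ -1 → ∀ n, coeff n (fz u i) = Bc i n := by
    refine Int.le_induction_down (motive := fun i _ => ∀ n, coeff n (fz u i) = Bc i n) ?_ ?_
    · exact hneg1
    · intro k hk ihk n
      have ha := hCoeffA u h1 h3 (k-1) n
      have hb := AlgM (k-1) n
      rw [show (k - 1 + 1 : ℤ) = k from by ring] at ha hb
      rw [ihk (n+1)] at ha
      push_cast at ha hb
      have hkq : (k:ℚ) ≤ -1 := by exact_mod_cast hk
      have hnq : (0:ℚ) ≤ (n:ℚ) := Nat.cast_nonneg n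
      -- ha : 2*(k-1)*(n+1) * Bc k (n+1) = 12*((k-1)+1)*n * A - 4*(k-1)*((k-1)+1) * A
      have hfac : (12*((k:ℚ)-1+1)*(n:ℚ) - 4*((k:ℚ)-1)*((k:ℚ)-1+1)) ≠ 0 := by
        have : 12*((k:ℚ)-1+1)*(n:ℚ) - 4*((k:ℚ)-1)*((k:ℚ)-1+1)
            = 4*(k:ℚ)*(3*(n:ℚ) - (k:ℚ) + 1) := by ring
        rw [this]
        have h4k : 4*(k:ℚ) < 0 := by linarith
        have hpos : 0 < 3*(n:ℚ) - (k:ℚ) + 1 := by linarith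
        exact ne_of_lt (mul_neg_of_neg_of_pos h4k hpos)
      have key : (12*((k:ℚ)-1+1)*(n:ℚ) - 4*((k:ℚ)-1)*((k:ℚ)-1+1)) * coeff n (fz u (k-1))
          = (12*((k:ℚ)-1+1)*(n:ℚ) - 4*((k:ℚ)-1)*((k:ℚ)-1+1)) * Bc (k-1) n := by
        linarith
      exact mul_left_cancel₀ hfac key
  rcases lt_trichotomy i 0 with hi | hi | hi
  · exact hdown i (by omega) n
  · subst hi
    rw [fz_zero, coeff_one, Bc]
    rcases Nat.eq_zero_or_pos n with h | h
    · simp [h]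
    · rw [if_neg (Nat.pos_iff_ne_zero.mp h), if_neg (Nat.pos_iff_ne_zero.mp h)]
      push_cast
      ring
  · exact hup i (by omega) n


lemma zpowPS_eq_fz (a : ℚ⟦X⟧) (hU : IsUnit a) (h1 : constantCoeff a = 1) (k : ℤ) :
    a ^ k.toNat * (a ^ (-k).toNat)⁻¹ = fz hU.unit k := by
  have hu : (↑hU.unit : ℚ⟦X⟧) = a := hU.unit_spec
  rcases le_or_gt 0 k with hk | hk
  · have h2 : (-k).toNat = 0 := by omega
    rw [h2, pow_zero]
    have hinv1 : (1:ℚ⟦X⟧)⁻¹ = 1 := by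
      have h := PowerSeries.mul_inv_cancel (1:ℚ⟦X⟧) (by simp)
      simpa using h
    have hfz : fz hU.unit k = a ^ k.toNat := by
      have hzz : (hU.unit)^k = (hU.unit)^(k.toNat) := by
        rw [← zpow_natCast hU.unit k.toNat, Int.toNat_of_nonneg hk]
      rw [fz, hzz, Units.val_pow_eq_pow_val, hu]
    rw [hinv1, mul_one, hfz]
  · have h2 : k.toNat = 0 := by omega
    rw [h2, pow_zero, one_mul]
    have hmk : ((((-k).toNat):ℕ):ℤ) = -k := Int.toNat_of_nonneg (by omega)
    have h5 : fz hU.unit k * a^((-k).toNat) = 1 := by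
      have hzz : (hU.unit)^k * (hU.unit)^((-k).toNat) = 1 := by
        rw [← zpow_natCast hU.unit ((-k).toNat), ← zpow_add,
          show k + ((((-k).toNat):ℕ):ℤ) = 0 from by omega, zpow_zero]
      calc fz hU.unit k * a^((-k).toNat)
          = ↑((hU.unit)^k * (hU.unit)^((-k).toNat)) := by
            rw [Units.val_mul, fz, Units.val_pow_eq_pow_val, hu]
        _ = 1 := by rw [hzz, Units.val_one]
    have hc : constantCoeff (a^((-k).toNat)) ≠ 0 := by
      rw [map_pow, h1, one_pow]; exact one_ne_zero
    have h6 := PowerSeries.mul_inv_cancel (a^((-k).toNat)) hc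
    calc (a^((-k).toNat))⁻¹ = (fz hU.unit k * a^((-k).toNat)) * (a^((-k).toNat))⁻¹ := by
          rw [h5, one_mul]
      _ = fz hU.unit k * (a^((-k).toNat) * (a^((-k).toNat))⁻¹) := by ring
      _ = fz hU.unit k := by rw [h6, mul_one]

end OneSubProofAux

open OneSubProofAux

theorem one_sub_two_alpha_pow (α : PowerSeries ℚ)
    (h0 : PowerSeries.constantCoeff α = 0)
    (hα : α * (1 - α) * (1 - 2 * α) = PowerSeries.X)
    (r : ℤ) :
    zpowPS (1 - 2 * α) (2 * r)
      = 1 - PowerSeries.mk (fun n =>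
          if n = 0 then 0
          else 2 ^ (2 * n) * ((r : ℚ) / (n : ℚ)) * qchoose (3 * n / 2 - r - 1) (n - 1)) := by
  have ht1 : constantCoeff (1 - 2*α : ℚ⟦X⟧) = 1 := by
    simp [h0]
  have hU : IsUnit (1 - 2*α : ℚ⟦X⟧) := by
    rw [PowerSeries.isUnit_iff_constantCoeff, ht1]; exact isUnit_one
  have hu : (↑hU.unit : ℚ⟦X⟧) = 1 - 2*α := hU.unit_spec
  have h1 : constantCoeff (↑hU.unit : ℚ⟦X⟧) = 1 := by rw [hu]; exact ht1
  have h3 : (↑hU.unit:ℚ⟦X⟧)^3 = (↑hU.unit:ℚ⟦X⟧) - 4*(X:ℚ⟦X⟧) := by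
    rw [hu]; linear_combination (-4:ℚ⟦X⟧) * hα
  unfold zpowPS
  rw [zpowPS_eq_fz (1 - 2*α) hU ht1 (2*r)]
  ext n
  rw [AeqBc hU.unit h1 h3, map_sub, coeff_one, coeff_mk]
  cases n with
  | zero => norm_num [Bc_zero]
  | succ m =>
    rw [Bc_succ, if_neg (Nat.succ_ne_zero m), if_neg (Nat.succ_ne_zero m)]
    push_cast
    rw [show (3*(((m:ℚ))+1) - (2*(r:ℚ)))/2 - 1 = 3*((m:ℚ)+1)/2 - (r:ℚ) - 1 from by ring]
    rw [show (4:ℚ) = 2^2 from by norm_num, ← pow_mul]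
    have hm : ((m:ℚ)+1) ≠ 0 := by positivity
    field_simp
    ring
end
end

section
/- For every integer m ≥ 0, if n = 2m+1 then (2^{2n-1}/n)·C(3n/2 - 2, n-1) = 2·m!·(6m)!/((2m)!·(2m+1)!·(3m)!), and if n = 2m+2 then (2^{2n-2}/n)·C(3n/2 - 3/2, n-1) = 6·m!·(6m+1)!/((2m)!·(2m+2)!·(3m)!), where the binomial coefficients are generalized binomial coefficients with rational upper arguments. -/
open Finset

lemma fct_ne (n : ℕ) : (n.factorial : ℚ) ≠ 0 := by exact_mod_cast n.factorial_ne_zero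

lemma prodL (a k : ℕ) :
    ∏ j ∈ Finset.range k, ((a : ℚ) + 1/2 + j)
      = (2*a+2*k).factorial * a.factorial
        / ((2*a).factorial * (a+k).factorial * 4^k) := by
  induction k with
  | zero =>
    simp only [Finset.range_zero, Finset.prod_empty, Nat.mul_zero, Nat.add_zero, pow_zero, mul_one]
    exact (div_self (mul_ne_zero (fct_ne _) (fct_ne _))).symm
  | succ k ih =>
    rw [Finset.prod_range_succ, ih]
    have h1 : 2*a+2*(k+1) = (2*a+2*k) + 1 + 1 := by ring
    have h2 : a + (k+1) = (a+k) + 1 := by ring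
    rw [h1, h2, Nat.factorial_succ, Nat.factorial_succ, Nat.factorial_succ]
    have f1 := fct_ne (2*a)
    have f2 := fct_ne (a+k)
    have f4 : ((4:ℚ)^k) ≠ 0 := by positivity
    have f5 : ((a:ℚ)+k+1) ≠ 0 := by positivity
    push_cast
    field_simp
    ring

lemma prodR (a k : ℕ) :
    ∏ j ∈ Finset.range k, ((a : ℚ) + k - 1/2 - j)
      = (2*a+2*k).factorial * a.factorial
        / ((2*a).factorial * (a+k).factorial * 4^k) := by
  rw [← prodL a k, ← Finset.prod_range_reflect]
  apply Finset.prod_congr rfl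
  intro j hj
  have hj' : j < k := Finset.mem_range.mp hj
  have hc : ((k - 1 - j : ℕ) : ℚ) = (k : ℚ) - 1 - j := by
    have h : k - 1 - j = k - (1 + j) := by omega
    rw [h, Nat.cast_sub (by omega : 1 + j ≤ k)]
    push_cast; ring
  rw [hc]; ring

lemma prod1 (m : ℕ) :
    ∏ j ∈ Finset.range (2*m), ((3*m : ℚ) - 1/2 - j)
      = (6*m).factorial * m.factorial
        / ((2*m).factorial * (3*m).factorial * 16^m) := by
  have h := prodR m (2*m)
  rw [show 2*m+2*(2*m) = 6*m by ring, show m + 2*m = 3*m by ring] at h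
  rw [show ((4:ℚ))^(2*m) = 16^m by rw [pow_mul]; norm_num] at h
  rw [← h]
  apply Finset.prod_congr rfl
  intro j _
  push_cast; ring

lemma prod2 (m : ℕ) :
    ∏ j ∈ Finset.range (2*m+1), ((3*m : ℚ) + 3/2 - j)
      = (6*m+4).factorial * (m+1).factorial
        / ((2*m+2).factorial * (3*m+2).factorial * (4 * 16^m)) := by
  have h := prodR (m+1) (2*m+1)
  rw [show 2*(m+1)+2*(2*m+1) = 6*m+4 by ring, show (m+1) + (2*m+1) = 3*m+2 by ring] at h
  rw [show ((4:ℚ))^(2*m+1) = 4 * 16^m by rw [pow_succ, pow_mul]; ring] at h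
  rw [show 2*(m+1) = 2*m+2 by ring] at h
  rw [← h]
  apply Finset.prod_congr rfl
  intro j _
  push_cast; ring

theorem Ncn_terms_factorial_form (m : ℕ) :
    (∀ n : ℕ, n = 2 * m + 1 →
      (2 : ℚ) ^ (2 * n - 1) / n * qchoose (3 * n / 2 - 2) (n - 1)
        = 2 * (m.factorial * (6 * m).factorial : ℚ)
            / ((2 * m).factorial * (2 * m + 1).factorial * (3 * m).factorial)) ∧
    (∀ n : ℕ, n = 2 * m + 2 →
      (2 : ℚ) ^ (2 * n - 2) / n * qchoose (3 * n / 2 - 3 / 2) (n - 1)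
        = 6 * (m.factorial * (6 * m + 1).factorial : ℚ)
            / ((2 * m).factorial * (2 * m + 2).factorial * (3 * m).factorial)) := by
  constructor
  · intro n hn
    subst hn
    rw [show 2*(2*m+1)-1 = 4*m+1 by omega, show 2*m+1-1 = 2*m by omega, qchoose]
    have hq : ∏ j ∈ Finset.range (2*m), (3 * ((2*m+1 : ℕ) : ℚ) / 2 - 2 - j)
        = ∏ j ∈ Finset.range (2*m), ((3*m : ℚ) - 1/2 - j) := by
      apply Finset.prod_congr rfl
      intro j _
      push_cast; ring
    rw [hq, prod1]
    have e1 : ((2:ℚ))^(4*m+1) = 2 * 16^m := by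
      rw [show (16:ℚ) = 2^4 by norm_num, ← pow_mul, pow_add]; ring
    have hfact : ((2*m+1).factorial : ℚ) = (2*m+1) * (2*m).factorial := by
      rw [Nat.factorial_succ]; push_cast; ring
    rw [e1, hfact]
    have f1 := fct_ne (2*m)
    have f2 := fct_ne (3*m)
    have f3 := fct_ne m
    have f4 := fct_ne (6*m)
    have f5 : ((16:ℚ)^m) ≠ 0 := by positivity
    have f6 : ((2*m+1 : ℕ) : ℚ) ≠ 0 := by positivity
    have f7 : ((2:ℚ)*m+1) ≠ 0 := by positivity
    push_cast
    field_simp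
  · intro n hn
    subst hn
    rw [show 2*(2*m+2)-2 = 4*m+2 by omega, show 2*m+2-1 = 2*m+1 by omega, qchoose]
    have hq : ∏ j ∈ Finset.range (2*m+1), (3 * ((2*m+2 : ℕ) : ℚ) / 2 - 3/2 - j)
        = ∏ j ∈ Finset.range (2*m+1), ((3*m : ℚ) + 3/2 - j) := by
      apply Finset.prod_congr rfl
      intro j _
      push_cast; ring
    rw [hq, prod2]
    have e1 : ((2:ℚ))^(4*m+2) = 4 * 16^m := by
      rw [show (16:ℚ) = 2^4 by norm_num, ← pow_mul, pow_add]; ring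
    have hA : ((6*m+4).factorial : ℚ)
        = (6*m+4)*((6*m+3)*((6*m+2)*(6*m+1).factorial)) := by
      rw [show 6*m+4 = (6*m+3)+1 by ring, Nat.factorial_succ,
          show 6*m+3 = (6*m+2)+1 by ring, Nat.factorial_succ,
          show 6*m+2 = (6*m+1)+1 by ring, Nat.factorial_succ]
      push_cast; ring
    have hB : ((3*m+2).factorial : ℚ) = (3*m+2)*((3*m+1)*(3*m).factorial) := by
      rw [show 3*m+2 = (3*m+1)+1 by ring, Nat.factorial_succ,
          show 3*m+1 = (3*m)+1 by rfl, Nat.factorial_succ]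
      push_cast; ring
    have hC : ((m+1).factorial : ℚ) = (m+1)*m.factorial := by
      rw [Nat.factorial_succ]; push_cast; ring
    have hD : ((2*m+2).factorial : ℚ) = (2*m+2)*((2*m+1)*(2*m).factorial) := by
      rw [show 2*m+2 = (2*m+1)+1 by ring, Nat.factorial_succ,
          show 2*m+1 = (2*m)+1 by rfl, Nat.factorial_succ]
      push_cast; ring
    have hE : ((2*m+1).factorial : ℚ) = (2*m+1)*(2*m).factorial := by
      rw [Nat.factorial_succ]; push_cast; ring
    rw [e1, hA, hB, hC, hD, hE]
    have f1 := fct_ne (2*m)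
    have f2 := fct_ne (3*m)
    have f3 := fct_ne m
    have f4 := fct_ne (6*m+1)
    have f5 : ((16:ℚ)^m) ≠ 0 := by positivity
    have f6 : ((2*m+2 : ℕ) : ℚ) ≠ 0 := by positivity
    have f7 : ((2:ℚ)*m+2) ≠ 0 := by positivity
    have f8 : ((2:ℚ)*m+1) ≠ 0 := by positivity
    have f9 : ((3:ℚ)*m+1) ≠ 0 := by positivity
    have f10 : ((3:ℚ)*m+2) ≠ 0 := by positivity
    have f11 : ((6:ℚ)*m+2) ≠ 0 := by positivity
    have f12 : ((6:ℚ)*m+3) ≠ 0 := by positivity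
    have f13 : ((6:ℚ)*m+4) ≠ 0 := by positivity
    have f14 : ((m:ℚ)+1) ≠ 0 := by positivity
    push_cast
    field_simp
    ring
end
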